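/- If Λ ~ ErlangMixture(π, β), i.e., Λ has density ∑_{k=1}^∞ q_k·erl(k,β)(λ) where erl(k,β) is the Erlang(k,β) density, and X | (Λ = λ) ~ Poisson(λ), then X ~ NBM(π, β/(β+1)): for every x ≥ 0, ∫_0^∞ (e^{-λ}λ^x/x!)·∑_{k=1}^∞ q_k·erl(k,β)(λ) dλ = ∑_{k=1}^∞ q_k·nb(k, β/(β+1))(x). -/

import Mathlib

open MeasureTheory Set Real

/-- The negative binomial probability function `nb(k,p)(x) = C(k+x-1,x) p^k (1-p)^x`. -/
noncomputable def nb (k : ℕ) (p : ℝ) (x : ℕ) : ℝ :=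
  (Nat.choose (k + x - 1) x : ℝ) * p ^ k * (1 - p) ^ x

lemma integrable_aux (n : ℕ) {r : ℝ} (hr : 0 < r) :
    IntegrableOn (fun t : ℝ => t ^ n * Real.exp (-(r * t))) (Set.Ioi 0) := by
  have hs : (-1 : ℝ) < n := neg_one_lt_zero.trans_le (Nat.cast_nonneg n)
  have h := integrableOn_rpow_mul_exp_neg_mul_rpow hs zero_lt_one hr
  refine h.congr_fun (fun t ht => ?_) measurableSet_Ioi
  dsimp only
  rw [Real.rpow_one, Real.rpow_natCast, neg_mul]

lemma integral_aux (n : ℕ) {r : ℝ} (hr : 0 < r) :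
    ∫ t in Set.Ioi (0 : ℝ), t ^ n * Real.exp (-(r * t))
      = (n.factorial : ℝ) / r ^ (n + 1) := by
  have h := Real.integral_rpow_mul_exp_neg_mul_Ioi (a := (n : ℝ) + 1) (r := r)
    (by positivity) hr
  have h2 : ∫ t in Set.Ioi (0 : ℝ), t ^ ((n : ℝ) + 1 - 1) * Real.exp (-(r * t))
      = ∫ t in Set.Ioi (0 : ℝ), t ^ n * Real.exp (-(r * t)) := by
    refine setIntegral_congr_fun measurableSet_Ioi (fun t ht => ?_)
    rw [add_sub_cancel_right, Real.rpow_natCast]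
  rw [h2] at h
  rw [h, Real.Gamma_nat_eq_factorial,
    show ((n : ℝ) + 1) = ((n + 1 : ℕ) : ℝ) by push_cast; ring, Real.rpow_natCast]
  field_simp
  rw [← mul_pow, one_div, inv_mul_cancel₀ hr.ne', one_pow]

theorem mixed_poisson_erlang_is_nbm (β : ℝ) (hβ : 0 < β)
    (q : ℕ → ℝ) (hq : ∀ k, 0 ≤ q k) (hqsum : ∑' k : ℕ, q (k + 1) = 1) (x : ℕ) :
    ∫ l in Set.Ioi (0 : ℝ),
        (Real.exp (-l) * l ^ x / (Nat.factorial x)) *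
          ∑' k : ℕ, q (k + 1) * (β ^ (k + 1) * l ^ k * Real.exp (-β * l) / (Nat.factorial k)) =
      ∑' k : ℕ, q (k + 1) * nb (k + 1) (β / (β + 1)) x := by
  have hβ1 : (0 : ℝ) < β + 1 := by linarith
  set p : ℝ := β / (β + 1) with hp
  have hp0 : 0 < p := by positivity
  have hp1 : p < 1 := by rw [hp, div_lt_one hβ1]; linarith
  -- the k-th term as a function of l
  set F : ℕ → ℝ → ℝ := fun k l =>
    (Real.exp (-l) * l ^ x / (Nat.factorial x)) *
      (q (k + 1) * (β ^ (k + 1) * l ^ k * Real.exp (-β * l) / (Nat.factorial k))) with hF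
  have hFeq : ∀ k l,
      F k l = (q (k + 1) * β ^ (k + 1) / ((Nat.factorial x) * (Nat.factorial k))) *
        (l ^ (x + k) * Real.exp (-((β + 1) * l))) := by
    intro k l
    rw [hF]
    simp only []
    rw [pow_add]
    rw [show -((β + 1) * l) = -l + -β * l by ring, Real.exp_add]
    field_simp
    ring
  -- integral of each term
  have hint : ∀ k, ∫ l in Set.Ioi (0 : ℝ), F k l = q (k + 1) * nb (k + 1) p x := by
    intro k
    simp_rw [hFeq]
    rw [integral_const_mul, integral_aux (x + k) hβ1]
    rw [nb]
    have hch : ((k + 1 + x - 1).choose x : ℝ) = ((x + k).factorial : ℝ) /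
        ((Nat.factorial x) * (Nat.factorial k)) := by
      rw [show k + 1 + x - 1 = x + k by omega]
      rw [eq_div_iff (by positivity)]
      rw [Nat.add_comm x k]
      norm_cast
      rw [← Nat.add_choose_mul_factorial_mul_factorial k x]
      ring
    rw [hch, hp]
    have h1p : (1 : ℝ) - β / (β + 1) = 1 / (β + 1) := by field_simp; ring
    rw [h1p]
    rw [div_pow, div_pow, one_pow]
    field_simp
    ring
  -- integrability of each term
  have hFint : ∀ k, Integrable (F k) (volume.restrict (Set.Ioi (0 : ℝ))) := by
    intro k
    have := (integrable_aux (x + k) hβ1).const_mul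
      (q (k + 1) * β ^ (k + 1) / ((Nat.factorial x) * (Nat.factorial k)))
    exact this.congr (Filter.Eventually.of_forall fun l => (hFeq k l).symm)
  -- each F k is nonnegative
  have hFnonneg : ∀ k l, l ∈ Set.Ioi (0 : ℝ) → 0 ≤ F k l := by
    intro k l hl
    rw [hFeq]
    have := hq (k + 1)
    have hl0 : 0 ≤ l := le_of_lt hl
    positivity
  -- bound q (k+1) ≤ 1
  have hqsummable : Summable fun k => q (k + 1) := by
    by_contra h
    rw [tsum_eq_zero_of_not_summable h] at hqsum
    norm_num at hqsum
  have hqle : ∀ k, q (k + 1) ≤ 1 := by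
    intro k
    rw [← hqsum]
    exact Summable.le_tsum hqsummable k (fun j _ => hq (j + 1))
  -- summability of the integrals of norms
  have hnbnonneg : ∀ k, 0 ≤ nb (k + 1) p x := by
    intro k
    rw [nb]
    have : (0:ℝ) ≤ 1 - p := by linarith
    positivity
  have hsum : Summable fun k => ∫ l in Set.Ioi (0 : ℝ), ‖F k l‖ := by
    have heq : ∀ k, (∫ l in Set.Ioi (0 : ℝ), ‖F k l‖) = q (k + 1) * nb (k + 1) p x := by
      intro k
      rw [← hint k]
      refine setIntegral_congr_fun measurableSet_Ioi (fun l hl => ?_)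
      exact Real.norm_of_nonneg (hFnonneg k l hl)
    simp_rw [heq]
    have hbig : Summable fun k : ℕ => ((k + x).choose x : ℝ) * p ^ k * (p * (1 - p) ^ x) := by
      exact (summable_choose_mul_geometric_of_norm_lt_one (R := ℝ) x
        (by rwa [Real.norm_eq_abs, abs_of_pos hp0])).mul_right _
    refine Summable.of_nonneg_of_le (fun k => mul_nonneg (hq (k + 1)) (hnbnonneg k))
      (fun k => ?_) hbig
    rw [nb]
    calc q (k + 1) * (((k + 1 + x - 1).choose x : ℝ) * p ^ (k + 1) * (1 - p) ^ x)
        ≤ 1 * (((k + 1 + x - 1).choose x : ℝ) * p ^ (k + 1) * (1 - p) ^ x) := by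
          apply mul_le_mul_of_nonneg_right (hqle k)
          have : (0:ℝ) ≤ 1 - p := by linarith
          positivity
      _ = ((k + x).choose x : ℝ) * p ^ k * (p * (1 - p) ^ x) := by
          rw [show k + 1 + x - 1 = k + x by omega, one_mul, pow_succ]
          ring
  -- interchange integral and sum
  have hswap := integral_tsum_of_summable_integral_norm hFint hsum
  have hlhs : ∀ l : ℝ,
      (Real.exp (-l) * l ^ x / (Nat.factorial x)) *
        (∑' k : ℕ, q (k + 1) * (β ^ (k + 1) * l ^ k * Real.exp (-β * l) / (Nat.factorial k)))
        = ∑' k : ℕ, F k l := by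
    intro l
    rw [← tsum_mul_left]
  calc ∫ l in Set.Ioi (0 : ℝ),
        (Real.exp (-l) * l ^ x / (Nat.factorial x)) *
          ∑' k : ℕ, q (k + 1) * (β ^ (k + 1) * l ^ k * Real.exp (-β * l) / (Nat.factorial k))
      = ∫ l in Set.Ioi (0 : ℝ), ∑' k : ℕ, F k l := by
        exact setIntegral_congr_fun measurableSet_Ioi (fun l _ => hlhs l)
    _ = ∑' k : ℕ, ∫ l in Set.Ioi (0 : ℝ), F k l := hswap.symm
    _ = ∑' k : ℕ, q (k + 1) * nb (k + 1) p x := by simp_rw [hint]
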